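/- Let $\Lambda_i[X] = \sum_\mu \lambda^{(i)}_\mu F^{(i)}_\mu X F^{(i)}_\mu$ ($i=1,2$) be maps on $M_{d_i}(\mathbb{C})$ with Hermitian orthonormal diagonal bases $\{F^{(i)}_\mu\}$. Suppose all coefficients $\lambda^{(i)}_\mu$ are nonnegative except one, say $\lambda^{(2)}_k = -|\lambda^{(2)}_k|$, and every nonnegative coefficient is $\ge |\lambda^{(2)}_k|$. Then the map $\Lambda = \Lambda_1 \otimes \mathrm{id}_{d_2} + \mathrm{id}_{d_1} \otimes \Lambda_2$ on $M_{d_1 d_2}(\mathbb{C})$ is positive: $\langle \psi | \Lambda[\,|\phi\rangle\langle\phi|\,] | \psi \rangle \ge 0$ for all $\phi, \psi \in \mathbb{C}^{d_1} \otimes \mathbb{C}^{d_2}$. -/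

import Mathlib

open Matrix

section AuxLemmas

private lemma cs_normSq {ι : Type*} [Fintype ι] (f g : ι → ℂ) :
    Complex.normSq (∑ i, f i * g i) ≤
      (∑ i, Complex.normSq (f i)) * (∑ i, Complex.normSq (g i)) := by
  have h1 : ‖∑ i, f i * g i‖ ≤ ∑ i, ‖f i‖ * ‖g i‖ := by
    refine le_trans (norm_sum_le Finset.univ (fun i => f i * g i)) ?_
    simp [norm_mul]
  have h2 : (∑ i, ‖f i‖ * ‖g i‖) ^ 2 ≤
      (∑ i, ‖f i‖ ^ 2) * (∑ i, ‖g i‖ ^ 2) :=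
    Finset.sum_mul_sq_le_sq_mul_sq _ _ _
  have h0 : (0:ℝ) ≤ ‖∑ i, f i * g i‖ := norm_nonneg _
  have h3 : ‖∑ i, f i * g i‖ ^ 2 ≤
      (∑ i, ‖f i‖ ^ 2) * (∑ i, ‖g i‖ ^ 2) :=
    le_trans (pow_le_pow_left₀ h0 h1 2) h2
  simpa [Complex.sq_norm] using h3

private lemma abs_le_of_cs {ι : Type*} [Fintype ι] (f g : ι → ℂ) (n : ℝ)
    (hf : (∑ i, Complex.normSq (f i)) = n) (hg : (∑ i, Complex.normSq (g i)) = n) :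
    ‖∑ i, f i * g i‖ ≤ n := by
  have hn : 0 ≤ n := by rw [← hf]; exact Finset.sum_nonneg fun i _ => Complex.normSq_nonneg _
  have h := cs_normSq f g
  rw [hf, hg] at h
  have h0 : (0:ℝ) ≤ ‖∑ i, f i * g i‖ := norm_nonneg _
  have hsq : ‖∑ i, f i * g i‖ ^ 2 ≤ n ^ 2 := by
    rw [Complex.sq_norm]; nlinarith
  nlinarith

private lemma swap3 {A B C : Type*} [Fintype A] [Fintype B] [Fintype C] {M : Type*}
    [AddCommMonoid M] (f : A → B → C → M) :
    ∑ a, ∑ b, ∑ c, f a b c = ∑ c, ∑ a, ∑ b, f a b c := by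
  calc ∑ a, ∑ b, ∑ c, f a b c = ∑ a, ∑ c, ∑ b, f a b c :=
        Finset.sum_congr rfl fun a _ => Finset.sum_comm
    _ = ∑ c, ∑ a, ∑ b, f a b c := Finset.sum_comm

private lemma swap4 {A B C D : Type*} [Fintype A] [Fintype B] [Fintype C] [Fintype D]
    {M : Type*} [AddCommMonoid M] (f : A → B → C → D → M) :
    ∑ a, ∑ b, ∑ c, ∑ d, f a b c d = ∑ c, ∑ d, ∑ a, ∑ b, f a b c d := by
  calc ∑ a, ∑ b, ∑ c, ∑ d, f a b c d
      = ∑ a, ∑ c, ∑ b, ∑ d, f a b c d := Finset.sum_congr rfl fun a _ => Finset.sum_comm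
    _ = ∑ c, ∑ a, ∑ b, ∑ d, f a b c d := Finset.sum_comm
    _ = ∑ c, ∑ a, ∑ d, ∑ b, f a b c d :=
        Finset.sum_congr rfl fun c _ => Finset.sum_congr rfl fun a _ => Finset.sum_comm
    _ = ∑ c, ∑ d, ∑ a, ∑ b, f a b c d := Finset.sum_congr rfl fun c _ => Finset.sum_comm

private lemma completeness {d : ℕ} (F : Fin (d ^ 2) → Matrix (Fin d) (Fin d) ℂ)
    (honb : ∀ μ μ', ((F μ)ᴴ * F μ').trace = if μ = μ' then 1 else 0)
    (p q : Fin d × Fin d) :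
    (∑ μ, F μ p.1 p.2 * star (F μ q.1 q.2)) = if p = q then 1 else 0 := by
  have hd : d ^ 2 = d * d := sq d
  let e : Fin (d ^ 2) ≃ Fin d × Fin d := (finCongr hd).trans finProdFinEquiv.symm
  let U : Matrix (Fin (d ^ 2)) (Fin (d ^ 2)) ℂ := fun μ i => star (F μ (e i).1 (e i).2)
  have htr : ∀ μ μ', ((F μ)ᴴ * F μ').trace =
      ∑ i : Fin (d ^ 2), star (F μ (e i).1 (e i).2) * F μ' (e i).1 (e i).2 := by
    intro μ μ'
    calc ((F μ)ᴴ * F μ').trace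
        = ∑ pq : Fin d × Fin d, star (F μ pq.1 pq.2) * F μ' pq.1 pq.2 := by
          rw [Matrix.trace, Fintype.sum_prod_type]
          simp only [Matrix.diag, Matrix.mul_apply, Matrix.conjTranspose_apply]
          exact Finset.sum_comm
      _ = _ := (Equiv.sum_comp e (fun pq : Fin d × Fin d =>
          star (F μ pq.1 pq.2) * F μ' pq.1 pq.2)).symm
  have hU : U * Uᴴ = 1 := by
    ext μ μ'
    simp only [Matrix.mul_apply, Matrix.conjTranspose_apply]
    simp only [Matrix.mul_apply, Matrix.conjTranspose_apply, Matrix.one_apply, U, star_star]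
    calc (∑ i, star (F μ (e i).1 (e i).2) * F μ' (e i).1 (e i).2)
        = ((F μ)ᴴ * F μ').trace := (htr μ μ').symm
      _ = _ := honb μ μ'
  have hU2 : Uᴴ * U = 1 := mul_eq_one_comm.mp hU
  have h := congrFun (congrFun hU2 (e.symm p)) (e.symm q)
  simp only [Matrix.mul_apply, Matrix.conjTranspose_apply] at h
  simp only [Matrix.mul_apply, Matrix.conjTranspose_apply, Matrix.one_apply, U, star_star,
    Equiv.apply_symm_apply] at h
  rw [h]
  simp [Equiv.symm_apply_eq, EmbeddingLike.apply_eq_iff_eq]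

private lemma parseval_flat {n : ℕ} {ι : Type*} [Fintype ι] [DecidableEq ι] (f : Fin n → ι → ℂ)
    (hc : ∀ p q : ι, (∑ μ, f μ p * star (f μ q)) = if p = q then 1 else 0) (Y : ι → ℂ) :
    ∑ μ, Complex.normSq (∑ p, star (f μ p) * Y p) = ∑ p, Complex.normSq (Y p) := by
  set S : Fin n → ℂ := fun μ => ∑ p, star (f μ p) * Y p with hS
  have key : ∑ μ, (S μ * star (S μ)) = ∑ p, Y p * star (Y p) := by
    have hstar : ∀ μ, star (S μ) = ∑ q, f μ q * star (Y q) := by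
      intro μ; rw [hS]; simp [star_sum, star_mul', mul_comm]
    calc ∑ μ, (S μ * star (S μ))
        = ∑ μ, ∑ p, ∑ q, (star (f μ p) * Y p) * (f μ q * star (Y q)) := by
          refine Finset.sum_congr rfl fun μ _ => ?_
          rw [hstar, hS, Finset.sum_mul_sum]
      _ = ∑ p, ∑ q, ∑ μ, (star (f μ p) * Y p) * (f μ q * star (Y q)) := by
          rw [Finset.sum_comm]
          exact Finset.sum_congr rfl fun p _ => Finset.sum_comm
      _ = ∑ p, ∑ q, (∑ μ, f μ q * star (f μ p)) * (Y p * star (Y q)) := by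
          refine Finset.sum_congr rfl fun p _ => Finset.sum_congr rfl fun q _ => ?_
          rw [Finset.sum_mul]
          exact Finset.sum_congr rfl fun μ _ => by ring
      _ = ∑ p, ∑ q, (if q = p then (1:ℂ) else 0) * (Y p * star (Y q)) := by
          refine Finset.sum_congr rfl fun p _ => Finset.sum_congr rfl fun q _ => ?_
          rw [hc q p]
      _ = ∑ p, Y p * star (Y p) := by
          refine Finset.sum_congr rfl fun p _ => ?_
          simp [ite_mul]
  have hcast : ((∑ μ, Complex.normSq (S μ) : ℝ) : ℂ) = ((∑ p, Complex.normSq (Y p) : ℝ) : ℂ) := by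
    push_cast
    simpa [Complex.mul_conj] using key
  exact_mod_cast hcast

private lemma key_bound {ι : Type*} [Fintype ι] (G Z : ι → ι → ℂ)
    (hG : ∀ i j, G i j = star (G j i))
    (hGn : (∑ i, ∑ j, Complex.normSq (G i j)) = 1) :
    2 * Complex.normSq (∑ i, ∑ j, G i j * Z j i) ≤
      (∑ i, ∑ j, Complex.normSq (Z i j)) + ‖∑ i, ∑ j, Z i j * Z j i‖ := by
  set α : ℂ := ∑ i, ∑ j, G i j * Z j i with hα
  set w : ℂ := ∑ i, ∑ j, Z i j * Z j i with hw
  set nZ : ℝ := ∑ i, ∑ j, Complex.normSq (Z i j) with hnZ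
  set c : ℂ := if α = 0 then 1 else star α / ((‖α‖ : ℝ) : ℂ) with hc
  have hc1 : Complex.normSq c = 1 := by
    rw [hc]
    split_ifs with h
    · simp
    · have habs : ‖α‖ ≠ 0 := by simpa using h
      rw [Complex.normSq_eq_norm_sq, norm_div, Complex.star_def, Complex.norm_conj,
        Complex.norm_real, Real.norm_eq_abs, _root_.abs_of_nonneg (norm_nonneg _), div_self habs]
      norm_num
  have hc2 : c * α = ((‖α‖ : ℝ) : ℂ) := by
    rw [hc]
    split_ifs with h
    · simp [h]
    · have habs : ((‖α‖ : ℝ) : ℂ) ≠ 0 := by simpa using h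
      field_simp
      rw [Complex.star_def, mul_comm, Complex.mul_conj, Complex.normSq_eq_norm_sq]
      push_cast; ring
  set H : ι → ι → ℂ := fun i j => c * Z i j + star c * star (Z j i) with hH
  have hstarα : ∑ i, ∑ j, G i j * star (Z i j) = star α := by
    rw [hα, star_sum, Finset.sum_comm]
    refine Finset.sum_congr rfl fun j _ => ?_
    rw [star_sum]
    exact Finset.sum_congr rfl fun i _ => by rw [star_mul', ← hG]
  have hβ : ∑ i, ∑ j, G i j * H j i = 2 * ((‖α‖ : ℝ) : ℂ) := by
    have hsummand : ∀ i j, G i j * H j i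
        = c * (G i j * Z j i) + star c * (G i j * star (Z i j)) := by
      intro i j; simp only [hH]; ring
    simp only [hsummand]
    simp only [Finset.sum_add_distrib, ← Finset.mul_sum]
    rw [← hα, hstarα, hc2, ← star_mul', hc2]
    simp; ring
  have hcs := cs_normSq (fun p : ι × ι => G p.1 p.2) (fun p : ι × ι => H p.2 p.1)
  rw [Fintype.sum_prod_type, Fintype.sum_prod_type, Fintype.sum_prod_type] at hcs
  simp only at hcs
  rw [hβ, hGn, one_mul] at hcs
  have hHswap : (∑ i : ι, ∑ j : ι, Complex.normSq (H j i))
      = ∑ i, ∑ j, Complex.normSq (H i j) := Finset.sum_comm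
  have hHnorm : (∑ i, ∑ j, Complex.normSq (H i j)) = 2 * nZ + 2 * (c^2 * w).re := by
    have h1 : ∀ i j, Complex.normSq (H i j) =
        Complex.normSq (Z i j) + Complex.normSq (Z j i)
          + 2 * (c^2 * (Z i j * Z j i)).re := by
      intro i j
      simp only [hH]
      rw [Complex.normSq_add]
      have e1 : Complex.normSq (c * Z i j) = Complex.normSq (Z i j) := by
        rw [Complex.normSq_mul, hc1, one_mul]
      have e2 : Complex.normSq (star c * star (Z j i)) = Complex.normSq (Z j i) := by
        simp only [Complex.star_def, Complex.normSq_mul, Complex.normSq_conj, hc1, one_mul]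
      have e3 : (c * Z i j * (starRingEnd ℂ) (star c * star (Z j i))).re
          = (c ^ 2 * (Z i j * Z j i)).re := by
        congr 1
        simp only [Complex.star_def, _root_.map_mul, Complex.conj_conj]
        ring
      rw [e1, e2, e3]
    simp only [h1, Finset.sum_add_distrib]
    have s1 : (∑ i : ι, ∑ j : ι, Complex.normSq (Z j i)) = nZ := Finset.sum_comm
    have s2 : (∑ i : ι, ∑ j : ι, 2 * (c^2 * (Z i j * Z j i)).re) = 2 * (c^2 * w).re := by
      have hcw : c^2 * w = ∑ i, ∑ j, c^2 * (Z i j * Z j i) := by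
        rw [hw, Finset.mul_sum]
        exact Finset.sum_congr rfl fun i _ => Finset.mul_sum _ _ _
      rw [hcw, Complex.re_sum, Finset.mul_sum]
      refine Finset.sum_congr rfl fun i _ => ?_
      rw [Complex.re_sum, Finset.mul_sum]
    rw [s1, s2, ← hnZ]
    ring
  have habsc : ‖c‖ = 1 := by
    rw [Complex.norm_def, hc1, Real.sqrt_one]
  have hre : (c^2 * w).re ≤ ‖w‖ := by
    refine le_trans (Complex.re_le_norm _) ?_
    rw [norm_mul, norm_pow, habsc]
    simp
  have hnormSq2 : Complex.normSq (2 * ((‖α‖ : ℝ) : ℂ)) = 4 * Complex.normSq α := by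
    have hsq := Complex.sq_norm α
    rw [sq] at hsq
    rw [Complex.normSq_mul, Complex.normSq_ofReal, hsq]
    norm_num [Complex.normSq_apply]
  rw [hHswap, hHnorm, hnormSq2] at hcs
  linarith

private lemma quad_rearrange {ι : Type*} [Fintype ι] {κ₁ κ₂ : Type*} [Fintype κ₁] [Fintype κ₂]
    {n : ℕ} (lam : Fin n → ℂ) (u : Fin n → ι → κ₁ → ℂ) (v : Fin n → ι → κ₂ → ℂ) (x y : ι → ℂ) :
    ∑ p, ∑ q, x p * ((∑ μ, lam μ * ∑ a, ∑ c, u μ p a * v μ q c) * y q)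
      = ∑ μ, lam μ * ((∑ p, ∑ a, x p * u μ p a) * (∑ q, ∑ c, v μ q c * y q)) := by
  have step1 : ∑ p, ∑ q, x p * ((∑ μ, lam μ * ∑ a, ∑ c, u μ p a * v μ q c) * y q)
      = ∑ p, ∑ q, ∑ μ, ∑ a, ∑ c, lam μ * ((x p * u μ p a) * (v μ q c * y q)) := by
    refine Finset.sum_congr rfl fun p _ => Finset.sum_congr rfl fun q _ => ?_
    rw [Finset.sum_mul, Finset.mul_sum]
    refine Finset.sum_congr rfl fun μ _ => ?_
    rw [mul_assoc, Finset.sum_mul, Finset.mul_sum, Finset.mul_sum]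
    refine Finset.sum_congr rfl fun a _ => ?_
    rw [Finset.sum_mul, Finset.mul_sum, Finset.mul_sum]
    exact Finset.sum_congr rfl fun c _ => by ring
  rw [step1, swap3 (fun p q μ => ∑ a, ∑ c, lam μ * ((x p * u μ p a) * (v μ q c * y q)))]
  refine Finset.sum_congr rfl fun μ _ => ?_
  have step2 : lam μ * ((∑ p, ∑ a, x p * u μ p a) * (∑ q, ∑ c, v μ q c * y q))
      = ∑ p, ∑ a, ∑ q, ∑ c, lam μ * ((x p * u μ p a) * (v μ q c * y q)) := by
    calc lam μ * ((∑ p, ∑ a, x p * u μ p a) * (∑ q, ∑ c, v μ q c * y q))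
        = lam μ * ((∑ pa : ι × κ₁, x pa.1 * u μ pa.1 pa.2) *
            (∑ qc : ι × κ₂, v μ qc.1 qc.2 * y qc.1)) := by
          rw [Fintype.sum_prod_type, Fintype.sum_prod_type]
      _ = ∑ pa : ι × κ₁, ∑ qc : ι × κ₂,
            lam μ * ((x pa.1 * u μ pa.1 pa.2) * (v μ qc.1 qc.2 * y qc.1)) := by
          rw [Finset.sum_mul_sum, Finset.mul_sum]
          exact Finset.sum_congr rfl fun pa _ => Finset.mul_sum _ _ _
      _ = ∑ p, ∑ a, ∑ q, ∑ c, lam μ * ((x p * u μ p a) * (v μ q c * y q)) := by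
          rw [Fintype.sum_prod_type]
          refine Finset.sum_congr rfl fun p _ => Finset.sum_congr rfl fun a _ => ?_
          rw [Fintype.sum_prod_type]
  rw [step2]
  refine Finset.sum_congr rfl fun p _ => ?_
  exact Finset.sum_comm

private lemma main_identity (d1 d2 : ℕ)
    (F1 : Fin (d1 ^ 2) → Matrix (Fin d1) (Fin d1) ℂ)
    (F2 : Fin (d2 ^ 2) → Matrix (Fin d2) (Fin d2) ℂ)
    (lam1 : Fin (d1 ^ 2) → ℝ) (lam2 : Fin (d2 ^ 2) → ℝ)
    (φ ψ : Fin d1 × Fin d2 → ℂ)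
    (h1herm : ∀ μ, (F1 μ).IsHermitian)
    (h2herm : ∀ ν, (F2 ν).IsHermitian) :
    star ψ ⬝ᵥ (Matrix.of fun (p q : Fin d1 × Fin d2) =>
        (∑ μ, (lam1 μ : ℂ) *
          ∑ a, ∑ c, F1 μ p.1 a * φ (a, p.2) * star (φ (c, q.2)) * F1 μ c q.1)
        + (∑ ν, (lam2 ν : ℂ) *
          ∑ b, ∑ e, F2 ν p.2 b * φ (p.1, b) * star (φ (q.1, e)) * F2 ν e q.2)).mulVec ψ =
      (∑ μ, (lam1 μ : ℂ) *
        ((∑ x, ∑ a, F1 μ x a * (∑ b, φ (a,b) * star (ψ (x,b)))) *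
          star (∑ x, ∑ a, F1 μ x a * (∑ b, φ (a,b) * star (ψ (x,b)))))) +
      (∑ ν, (lam2 ν : ℂ) *
        ((∑ t, ∑ b, F2 ν t b * (∑ x, φ (x,b) * star (ψ (x,t)))) *
          star (∑ t, ∑ b, F2 ν t b * (∑ x, φ (x,b) * star (ψ (x,t)))))) := by
  have hF1 : ∀ μ x a, star (F1 μ x a) = F1 μ a x := by
    intro μ x a
    have := congrFun (congrFun (h1herm μ) a) x
    simpa [Matrix.conjTranspose_apply] using this
  have hF2 : ∀ ν x a, star (F2 ν x a) = F2 ν a x := by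
    intro ν x a
    have := congrFun (congrFun (h2herm ν) a) x
    simpa [Matrix.conjTranspose_apply] using this
  set u1 : Fin (d1^2) → (Fin d1 × Fin d2) → Fin d1 → ℂ :=
    fun μ p a => F1 μ p.1 a * φ (a, p.2) with hu1
  set v1 : Fin (d1^2) → (Fin d1 × Fin d2) → Fin d1 → ℂ :=
    fun μ q c => star (φ (c, q.2)) * F1 μ c q.1 with hv1
  set u2 : Fin (d2^2) → (Fin d1 × Fin d2) → Fin d2 → ℂ :=
    fun ν p b => F2 ν p.2 b * φ (p.1, b) with hu2
  set v2 : Fin (d2^2) → (Fin d1 × Fin d2) → Fin d2 → ℂ :=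
    fun ν q e => star (φ (q.1, e)) * F2 ν e q.2 with hv2
  have hsplit : star ψ ⬝ᵥ (Matrix.of fun (p q : Fin d1 × Fin d2) =>
        (∑ μ, (lam1 μ : ℂ) *
          ∑ a, ∑ c, F1 μ p.1 a * φ (a, p.2) * star (φ (c, q.2)) * F1 μ c q.1)
        + (∑ ν, (lam2 ν : ℂ) *
          ∑ b, ∑ e, F2 ν p.2 b * φ (p.1, b) * star (φ (q.1, e)) * F2 ν e q.2)).mulVec ψ =
      (∑ p, ∑ q, star ψ p * ((∑ μ, (lam1 μ:ℂ) * ∑ a, ∑ c, u1 μ p a * v1 μ q c) * ψ q))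
      + (∑ p, ∑ q, star ψ p * ((∑ ν, (lam2 ν:ℂ) * ∑ b, ∑ e, u2 ν p b * v2 ν q e) * ψ q)) := by
    rw [dotProduct, ← Finset.sum_add_distrib]
    refine Finset.sum_congr rfl fun p _ => ?_
    rw [Matrix.mulVec, dotProduct, Finset.mul_sum, ← Finset.sum_add_distrib]
    refine Finset.sum_congr rfl fun q _ => ?_
    simp only [Matrix.of_apply, Pi.star_apply, hu1, hv1, hu2, hv2]
    rw [add_mul, mul_add]
    congr 1
    · congr 2
      refine Finset.sum_congr rfl fun μ _ => ?_
      congr 1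
      exact Finset.sum_congr rfl fun a _ => Finset.sum_congr rfl fun c _ => by ring
    · congr 2
      refine Finset.sum_congr rfl fun ν _ => ?_
      congr 1
      exact Finset.sum_congr rfl fun b _ => Finset.sum_congr rfl fun e _ => by ring
  rw [hsplit, quad_rearrange, quad_rearrange]
  congr 1
  · refine Finset.sum_congr rfl fun μ _ => ?_
    congr 1
    have hP : (∑ p : Fin d1 × Fin d2, ∑ a, star ψ p * u1 μ p a)
        = ∑ x, ∑ a, F1 μ x a * (∑ b, φ (a,b) * star (ψ (x,b))) := by
      rw [Fintype.sum_prod_type]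
      refine Finset.sum_congr rfl fun x _ => Finset.sum_comm.trans ?_
      refine Finset.sum_congr rfl fun a _ => ?_
      simp only [hu1, Pi.star_apply]
      rw [Finset.mul_sum]
      exact Finset.sum_congr rfl fun b _ => by ring
    have hQ : (∑ q : Fin d1 × Fin d2, ∑ c, v1 μ q c * ψ q)
        = star (∑ x, ∑ a, F1 μ x a * (∑ b, φ (a,b) * star (ψ (x,b)))) := by
      have hstar : star (∑ x, ∑ a, F1 μ x a * (∑ b, φ (a,b) * star (ψ (x,b))))
          = ∑ x, ∑ a, ∑ b, F1 μ a x * (star (φ (a,b)) * ψ (x,b)) := by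
        rw [star_sum]
        refine Finset.sum_congr rfl fun x _ => ?_
        rw [star_sum]
        refine Finset.sum_congr rfl fun a _ => ?_
        rw [star_mul', hF1, star_sum, Finset.mul_sum]
        refine Finset.sum_congr rfl fun b _ => ?_
        rw [star_mul', star_star]
        try ring
      rw [hstar, Fintype.sum_prod_type]
      refine Finset.sum_congr rfl fun x _ => ?_
      rw [Finset.sum_comm]
      refine Finset.sum_congr rfl fun c _ => Finset.sum_congr rfl fun b _ => ?_
      simp only [hv1, Pi.star_apply]
      ring
    rw [hP, hQ]
  · refine Finset.sum_congr rfl fun ν _ => ?_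
    congr 1
    have hP : (∑ p : Fin d1 × Fin d2, ∑ b, star ψ p * u2 ν p b)
        = ∑ t, ∑ b, F2 ν t b * (∑ x, φ (x,b) * star (ψ (x,t))) := by
      rw [Fintype.sum_prod_type]
      rw [Finset.sum_comm]
      refine Finset.sum_congr rfl fun t _ => ?_
      rw [Finset.sum_comm]
      refine Finset.sum_congr rfl fun b _ => ?_
      simp only [hu2, Pi.star_apply]
      rw [Finset.mul_sum]
      exact Finset.sum_congr rfl fun x _ => by ring
    have hQ : (∑ q : Fin d1 × Fin d2, ∑ e, v2 ν q e * ψ q)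
        = star (∑ t, ∑ b, F2 ν t b * (∑ x, φ (x,b) * star (ψ (x,t)))) := by
      have hstar : star (∑ t, ∑ b, F2 ν t b * (∑ x, φ (x,b) * star (ψ (x,t))))
          = ∑ t, ∑ b, ∑ x, F2 ν b t * (star (φ (x,b)) * ψ (x,t)) := by
        rw [star_sum]
        refine Finset.sum_congr rfl fun t _ => ?_
        rw [star_sum]
        refine Finset.sum_congr rfl fun b _ => ?_
        rw [star_mul', hF2, star_sum, Finset.mul_sum]
        refine Finset.sum_congr rfl fun x _ => ?_
        rw [star_mul', star_star]
        try ring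
      rw [hstar, Fintype.sum_prod_type, Finset.sum_comm]
      refine Finset.sum_congr rfl fun t _ => ?_
      rw [Finset.sum_comm]
      refine Finset.sum_congr rfl fun b _ => Finset.sum_congr rfl fun x _ => ?_
      simp only [hv2, Pi.star_apply]
      ring
    rw [hP, hQ]

end AuxLemmas

set_option maxHeartbeats 2000000 in
/-- Theorem 3 of the paper: `Λ = Λ₁ ⊗ id + id ⊗ Λ₂` with Hermitian diagonal bases,
all coefficients nonnegative except one (`λ²_k ≤ 0`), every nonnegative coefficient
`≥ |λ²_k|`, is a positive map: `⟨ψ|Λ[|φ⟩⟨φ|]|ψ⟩ ≥ 0` for all `φ, ψ`. -/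
theorem sum_map_positive (d1 d2 : ℕ)
    (F1 : Fin (d1 ^ 2) → Matrix (Fin d1) (Fin d1) ℂ)
    (F2 : Fin (d2 ^ 2) → Matrix (Fin d2) (Fin d2) ℂ)
    (h1herm : ∀ μ, (F1 μ).IsHermitian)
    (h2herm : ∀ ν, (F2 ν).IsHermitian)
    (h1onb : ∀ μ μ', ((F1 μ)ᴴ * F1 μ').trace = if μ = μ' then 1 else 0)
    (h2onb : ∀ ν ν', ((F2 ν)ᴴ * F2 ν').trace = if ν = ν' then 1 else 0)
    (lam1 : Fin (d1 ^ 2) → ℝ) (lam2 : Fin (d2 ^ 2) → ℝ) (k : Fin (d2 ^ 2))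
    (h1pos : ∀ μ, 0 ≤ lam1 μ)
    (h2pos : ∀ ν, ν ≠ k → 0 ≤ lam2 ν)
    (hkneg : lam2 k ≤ 0)
    (h1bd : ∀ μ, |lam2 k| ≤ lam1 μ)
    (h2bd : ∀ ν, ν ≠ k → |lam2 k| ≤ lam2 ν)
    (φ ψ : Fin d1 × Fin d2 → ℂ) :
    let M : Matrix (Fin d1 × Fin d2) (Fin d1 × Fin d2) ℂ :=
      Matrix.of fun p q =>
        (∑ μ, (lam1 μ : ℂ) *
          ∑ a, ∑ c, F1 μ p.1 a * φ (a, p.2) * star (φ (c, q.2)) * F1 μ c q.1)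
        + (∑ ν, (lam2 ν : ℂ) *
          ∑ b, ∑ e, F2 ν p.2 b * φ (p.1, b) * star (φ (q.1, e)) * F2 ν e q.2)
    0 ≤ (star ψ ⬝ᵥ M.mulVec ψ).re ∧ (star ψ ⬝ᵥ M.mulVec ψ).im = 0 := by
  intro M
  have hF1 : ∀ μ x a, star (F1 μ x a) = F1 μ a x := by
    intro μ x a
    have := congrFun (congrFun (h1herm μ) a) x
    simpa [Matrix.conjTranspose_apply] using this
  have hF2 : ∀ ν x a, star (F2 ν x a) = F2 ν a x := by
    intro ν x a
    have := congrFun (congrFun (h2herm ν) a) x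
    simpa [Matrix.conjTranspose_apply] using this
  set A : Fin (d1^2) → ℂ :=
    fun μ => ∑ x, ∑ a, F1 μ x a * (∑ b, φ (a,b) * star (ψ (x,b))) with hA
  set B : Fin (d2^2) → ℂ :=
    fun ν => ∑ t, ∑ b, F2 ν t b * (∑ x, φ (x,b) * star (ψ (x,t))) with hB
  have hid : star ψ ⬝ᵥ M.mulVec ψ =
      (∑ μ, (lam1 μ : ℂ) * (A μ * star (A μ))) + (∑ ν, (lam2 ν : ℂ) * (B ν * star (B ν))) :=
    main_identity d1 d2 F1 F2 lam1 lam2 φ ψ h1herm h2herm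
  set R : ℝ := (∑ μ, lam1 μ * Complex.normSq (A μ)) + (∑ ν, lam2 ν * Complex.normSq (B ν))
    with hR
  have hreal : star ψ ⬝ᵥ M.mulVec ψ = (R : ℂ) := by
    rw [hid, hR]
    push_cast
    congr 1
    · refine Finset.sum_congr rfl fun μ _ => ?_
      rw [Complex.star_def, Complex.mul_conj]
    · refine Finset.sum_congr rfl fun ν _ => ?_
      rw [Complex.star_def, Complex.mul_conj]
  -- Parseval for A
  set nY : ℝ := ∑ a, ∑ x, Complex.normSq (∑ b, φ (a,b) * star (ψ (x,b))) with hnY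
  set nZ : ℝ := ∑ b, ∑ t, Complex.normSq (∑ x, φ (x,b) * star (ψ (x,t))) with hnZ
  have hPars1 : ∑ μ, Complex.normSq (A μ) = nY := by
    have hAeq : ∀ μ, A μ = ∑ p : Fin d1 × Fin d1,
        star (F1 μ p.1 p.2) * (∑ b, φ (p.1,b) * star (ψ (p.2,b))) := by
      intro μ
      rw [hA, Fintype.sum_prod_type]
      simp only
      rw [Finset.sum_comm]
      refine Finset.sum_congr rfl fun a _ => Finset.sum_congr rfl fun x _ => ?_
      rw [hF1 μ a x]
    calc ∑ μ, Complex.normSq (A μ)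
        = ∑ μ, Complex.normSq (∑ p : Fin d1 × Fin d1,
            star (F1 μ p.1 p.2) * (∑ b, φ (p.1,b) * star (ψ (p.2,b)))) := by
          exact Finset.sum_congr rfl fun μ _ => by rw [hAeq]
      _ = ∑ p : Fin d1 × Fin d1, Complex.normSq (∑ b, φ (p.1,b) * star (ψ (p.2,b))) :=
          parseval_flat (fun μ p => F1 μ p.1 p.2)
            (fun p q => completeness F1 h1onb p q)
            (fun p => ∑ b, φ (p.1,b) * star (ψ (p.2,b)))
      _ = nY := by rw [hnY, Fintype.sum_prod_type]
  have hPars2 : ∑ ν, Complex.normSq (B ν) = nZ := by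
    have hBeq : ∀ ν, B ν = ∑ p : Fin d2 × Fin d2,
        star (F2 ν p.1 p.2) * (∑ x, φ (x,p.1) * star (ψ (x,p.2))) := by
      intro ν
      rw [hB, Fintype.sum_prod_type]
      simp only
      rw [Finset.sum_comm]
      refine Finset.sum_congr rfl fun b _ => Finset.sum_congr rfl fun t _ => ?_
      rw [hF2 ν b t]
    calc ∑ ν, Complex.normSq (B ν)
        = ∑ ν, Complex.normSq (∑ p : Fin d2 × Fin d2,
            star (F2 ν p.1 p.2) * (∑ x, φ (x,p.1) * star (ψ (x,p.2)))) := by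
          exact Finset.sum_congr rfl fun ν _ => by rw [hBeq]
      _ = ∑ p : Fin d2 × Fin d2, Complex.normSq (∑ x, φ (x,p.1) * star (ψ (x,p.2))) :=
          parseval_flat (fun ν p => F2 ν p.1 p.2)
            (fun p q => completeness F2 h2onb p q)
            (fun p => ∑ x, φ (x,p.1) * star (ψ (x,p.2)))
      _ = nZ := by rw [hnZ, Fintype.sum_prod_type]
  -- key bound for B k
  set w : ℂ := ∑ i, ∑ j, (∑ x, φ (x,i) * star (ψ (x,j))) * (∑ x, φ (x,j) * star (ψ (x,i)))
    with hw
  have hkb : 2 * Complex.normSq (B k) ≤ nZ + ‖w‖ := by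
    have hGn : (∑ i, ∑ j, Complex.normSq (F2 k i j)) = 1 := by
      have h := h2onb k k
      rw [if_pos rfl] at h
      have htr : ((F2 k)ᴴ * F2 k).trace
          = ((∑ i, ∑ j, Complex.normSq (F2 k i j) : ℝ) : ℂ) := by
        push_cast
        rw [Matrix.trace]
        simp only [Matrix.diag, Matrix.mul_apply, Matrix.conjTranspose_apply]
        rw [Finset.sum_comm]
        refine Finset.sum_congr rfl fun o _ => Finset.sum_congr rfl fun n _ => ?_
        rw [Complex.star_def, mul_comm ((starRingEnd ℂ) (F2 k o n)) (F2 k o n),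
          Complex.mul_conj]
      rw [htr] at h
      exact_mod_cast h
    have hkey := key_bound (fun i j => F2 k i j)
      (fun i j => ∑ x, φ (x,i) * star (ψ (x,j)))
      (fun i j => (hF2 k j i).symm) hGn
    have hBk : B k = ∑ i, ∑ j, F2 k i j * (∑ x, φ (x,j) * star (ψ (x,i))) := by
      rw [hB]
    rw [← hBk, ← hw, ← hnZ] at hkey
    exact hkey
  have habsw : ‖w‖ ≤ nY := by
    have hwv : w = ∑ pp : Fin d1 × Fin d1,
        (∑ b, φ (pp.1,b) * star (ψ (pp.2,b))) * (∑ e, φ (pp.2,e) * star (ψ (pp.1,e))) := by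
      have hw1 : w = ∑ i, ∑ j, ∑ x, ∑ y,
          (φ (x,i) * star (ψ (x,j))) * (φ (y,j) * star (ψ (y,i))) := by
        rw [hw]
        refine Finset.sum_congr rfl fun i _ => Finset.sum_congr rfl fun j _ => ?_
        rw [Finset.sum_mul_sum]
      rw [hw1, swap4 (fun i j x y => (φ (x,i) * star (ψ (x,j))) * (φ (y,j) * star (ψ (y,i))))]
      rw [Fintype.sum_prod_type]
      refine Finset.sum_congr rfl fun x _ => Finset.sum_congr rfl fun y _ => ?_
      rw [Finset.sum_mul_sum]
      refine Finset.sum_congr rfl fun i _ => Finset.sum_congr rfl fun j _ => by ring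
    rw [hwv]
    refine abs_le_of_cs _ _ nY ?_ ?_
    · rw [hnY, Fintype.sum_prod_type]
    · rw [hnY, Fintype.sum_prod_type]
      exact Finset.sum_comm
  -- final arithmetic
  have hL : (0:ℝ) ≤ -lam2 k := by linarith
  have habs : |lam2 k| = -lam2 k := abs_of_nonpos hkneg
  have hA1 : (∑ μ, (-lam2 k) * Complex.normSq (A μ)) ≤ ∑ μ, lam1 μ * Complex.normSq (A μ) := by
    refine Finset.sum_le_sum fun μ _ => ?_
    exact mul_le_mul_of_nonneg_right (by rw [← habs]; exact h1bd μ) (Complex.normSq_nonneg _)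
  have hsplit2 : ∑ ν, lam2 ν * Complex.normSq (B ν) =
      lam2 k * Complex.normSq (B k)
      + ∑ ν ∈ Finset.univ.erase k, lam2 ν * Complex.normSq (B ν) :=
    (Finset.add_sum_erase _ _ (Finset.mem_univ k)).symm
  have hsplit3 : ∑ ν, Complex.normSq (B ν) =
      Complex.normSq (B k) + ∑ ν ∈ Finset.univ.erase k, Complex.normSq (B ν) :=
    (Finset.add_sum_erase _ _ (Finset.mem_univ k)).symm
  have hB1 : (∑ ν ∈ Finset.univ.erase k, (-lam2 k) * Complex.normSq (B ν))
      ≤ ∑ ν ∈ Finset.univ.erase k, lam2 ν * Complex.normSq (B ν) := by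
    refine Finset.sum_le_sum fun ν hν => ?_
    have hne : ν ≠ k := Finset.ne_of_mem_erase hν
    exact mul_le_mul_of_nonneg_right (by rw [← habs]; exact h2bd ν hne)
      (Complex.normSq_nonneg _)
  have hmulA : (∑ μ, (-lam2 k) * Complex.normSq (A μ)) = (-lam2 k) * nY := by
    rw [← Finset.mul_sum, hPars1]
  have hmulB : (∑ ν ∈ Finset.univ.erase k, (-lam2 k) * Complex.normSq (B ν))
      = (-lam2 k) * (nZ - Complex.normSq (B k)) := by
    rw [← Finset.mul_sum]
    congr 1
    rw [hPars2] at hsplit3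
    linarith
  have hkey2 : 2 * Complex.normSq (B k) ≤ nY + nZ := by linarith
  have hRpos : 0 ≤ R := by
    rw [hR]
    have hprod : 0 ≤ (-lam2 k) * (nY + nZ - 2 * Complex.normSq (B k)) :=
      mul_nonneg hL (by linarith)
    nlinarith [hA1, hB1, hmulA, hmulB, hsplit2]
  constructor
  · rw [hreal]; simpa using hRpos
  · rw [hreal]; simp
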